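/- Let 1 ≤ p < ∞, m : F → L(E,F) a countably additive vector measure of finite variation with |m| ≪ ℙ, and A ∈ F with m̄_q(A) < ∞ (1/p+1/q=1). Then every Y ∈ L^p(Ω,E,ℙ) supported in A is m-integrable, and ‖∫ Y dm‖_F ≤ ∫ ‖Y‖_E d|m| ≤ (E[‖Y‖_E^p])^{1/p} · m̄_q(A). -/

import Mathlib

open MeasureTheory ENNReal Filter

noncomputable section

/-- Countable additivity of a vector-valued set function. -/
def CountablyAdditiveM {Ω X : Type*} [MeasurableSpace Ω] [NormedAddCommGroup X]
    (m : Set Ω → X) : Prop :=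
  ∀ As : ℕ → Set Ω, (∀ i, MeasurableSet (As i)) → Pairwise (Function.onFun Disjoint As) →
    Tendsto (fun n => ∑ i ∈ Finset.range n, m (As i)) atTop (nhds (m (⋃ i, As i)))

/-- Total variation of a vector-valued set function over disjoint measurable subsets. -/
def varM {Ω X : Type*} [MeasurableSpace Ω] [NormedAddCommGroup X]
    (m : Set Ω → X) (A : Set Ω) : ℝ≥0∞ :=
  ⨆ (n : ℕ) (As : Fin n → Set Ω) (_ : ∀ i, MeasurableSet (As i))
    (_ : Pairwise (Function.onFun Disjoint As)) (_ : ∀ i, As i ⊆ A),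
    ∑ i, (‖m (As i)‖₊ : ℝ≥0∞)

/-- The `q`-variation of `m` relative to `ℙ`, indexed by the conjugate (constraint)
exponent `p` (`1/p + 1/q = 1`). -/
def qVar {Ω E F : Type*} [MeasurableSpace Ω] [NormedAddCommGroup E] [NormedSpace ℝ E]
    [NormedAddCommGroup F] [NormedSpace ℝ F]
    (P : Measure Ω) (m : Set Ω → (E →L[ℝ] F)) (p : ℝ≥0∞) (A : Set Ω) : ℝ≥0∞ :=
  ⨆ (n : ℕ) (As : Fin n → Set Ω) (xs : Fin n → E) (_ : ∀ i, MeasurableSet (As i))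
    (_ : Pairwise (Function.onFun Disjoint As)) (_ : ∀ i, As i ⊆ A)
    (_ : eLpNorm (fun ω => ∑ i, (As i).indicator (fun _ => xs i) ω) p P ≤ 1),
    ∑ i, (‖m (As i) (xs i)‖₊ : ℝ≥0∞)

/-- Integral of a simple function against an operator-valued set function. -/
def simpleIntegral {Ω E F : Type*} [MeasurableSpace Ω]
    [NormedAddCommGroup E] [NormedSpace ℝ E] [NormedAddCommGroup F] [NormedSpace ℝ F]
    [MeasurableSpace E]
    (m : Set Ω → (E →L[ℝ] F)) (Y : SimpleFunc Ω E) : F :=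
  ∑ x ∈ Y.range, m (Y ⁻¹' {x}) x

section AuxLemmas

lemma real_nnnorm_nnreal (c : NNReal) : ‖((c : ℝ))‖₊ = c := by
  exact_mod_cast Real.nnnorm_of_nonneg c.coe_nonneg

variable {Ω X : Type*} [MeasurableSpace Ω] [NormedAddCommGroup X] {m : Set Ω → X}

theorem m_empty (hca : CountablyAdditiveM m) : m ∅ = 0 := by
  have h := hca (fun _ => ∅) (fun _ => MeasurableSet.empty)
    (fun i j _ => by simp [Function.onFun])
  simp only [Set.iUnion_empty] at h
  have h1 : Tendsto (fun n => ∑ _i ∈ Finset.range (n+1), m ∅) atTop (nhds (m ∅)) :=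
    h.comp (tendsto_add_atTop_nat 1)
  have h2 : Tendsto (fun n => (∑ _i ∈ Finset.range (n+1), m ∅) - ∑ _i ∈ Finset.range n, m ∅)
      atTop (nhds (m ∅ - m ∅)) := h1.sub h
  simp only [Finset.sum_range_succ, add_sub_cancel_left, sub_self] at h2
  exact tendsto_nhds_unique tendsto_const_nhds h2

theorem m_union (hca : CountablyAdditiveM m) {B C : Set Ω} (hB : MeasurableSet B)
    (hC : MeasurableSet C) (hd : Disjoint B C) : m (B ∪ C) = m B + m C := by
  classical
  let As : ℕ → Set Ω := fun i => if i = 0 then B else if i = 1 then C else ∅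
  have hAs0 : As 0 = B := rfl
  have hAs1 : As 1 = C := rfl
  have hAsge : ∀ i, 2 ≤ i → As i = ∅ := by
    intro i hi
    have h0 : i ≠ 0 := by omega
    have h1 : i ≠ 1 := by omega
    simp [As, h0, h1]
  have hmeas : ∀ i, MeasurableSet (As i) := by
    intro i
    rcases Nat.lt_or_ge i 2 with h | h
    · interval_cases i
      · exact hB
      · exact hC
    · rw [hAsge i h]; exact MeasurableSet.empty
  have hdisj : Pairwise (Function.onFun Disjoint As) := by
    intro i j hij
    rcases Nat.lt_or_ge i 2 with h | h
    · rcases Nat.lt_or_ge j 2 with h' | h'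
      · interval_cases i <;> interval_cases j <;> simp_all [Function.onFun, hd, hd.symm]
      · simp [Function.onFun, hAsge j h']
    · simp [Function.onFun, hAsge i h]
  have h := hca As hmeas hdisj
  have hU : (⋃ i, As i) = B ∪ C := by
    apply subset_antisymm
    · apply Set.iUnion_subset
      intro i
      rcases Nat.lt_or_ge i 2 with hh | hh
      · interval_cases i
        · exact Set.subset_union_left
        · exact Set.subset_union_right
      · rw [hAsge i hh]; exact Set.empty_subset _
    · apply Set.union_subset
      · exact hAs0 ▸ (Set.subset_iUnion As 0)
      · exact hAs1 ▸ (Set.subset_iUnion As 1)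
  rw [hU] at h
  have h2 : Tendsto (fun _ : ℕ => m B + m C) atTop (nhds (m (B ∪ C))) := by
    apply h.congr'
    filter_upwards [eventually_ge_atTop 2] with n hn
    rw [← Finset.sum_subset (Finset.range_subset_range.2 hn)
      (fun i hi hi2 => by
        have : 2 ≤ i := by
          by_contra hcon
          exact hi2 (Finset.mem_range.2 (by omega))
        rw [hAsge i this, m_empty hca])]
    simp [Finset.sum_range_succ, hAs0, hAs1]
  exact tendsto_nhds_unique h2 tendsto_const_nhds

theorem m_biUnion (hca : CountablyAdditiveM m) {ι : Type*} (t : Finset ι) (B : ι → Set Ω)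
    (hmeas : ∀ i ∈ t, MeasurableSet (B i))
    (hd : (t : Set ι).PairwiseDisjoint B) :
    m (⋃ i ∈ t, B i) = ∑ i ∈ t, m (B i) := by
  classical
  induction t using Finset.cons_induction with
  | empty => simpa using m_empty hca
  | cons a t ha ih =>
    rw [Finset.cons_eq_insert, Finset.set_biUnion_insert, Finset.sum_insert (by simpa using ha)]
    rw [m_union hca (hmeas a (by simp)) (t.measurableSet_biUnion
        (fun i hi => hmeas i (Finset.mem_cons_of_mem hi)))
      (Set.disjoint_iUnion₂_right.2 fun i hi =>
        hd (by simp) (by simp; exact Or.inr hi) (fun h => ha (h ▸ hi)))]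
    rw [ih (fun i hi => hmeas i (Finset.mem_cons_of_mem hi))
      (hd.subset (by simp [Finset.coe_cons, Set.subset_insert]))]

theorem nnnorm_le_varM {B : Set Ω} (hB : MeasurableSet B) :
    (‖m B‖₊ : ℝ≥0∞) ≤ varM m B := by
  refine le_trans ?_ (le_iSup _ 1)
  refine le_trans ?_ (le_iSup _ (fun _ : Fin 1 => B))
  refine le_trans ?_ (le_iSup _ (fun _ => hB))
  refine le_trans ?_ (le_iSup _ (Subsingleton.pairwise))
  refine le_trans ?_ (le_iSup _ (fun _ => le_refl B))
  simp

end AuxLemmas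

section SILemmas

variable {Ω E F : Type*} [MeasurableSpace Ω]
    [NormedAddCommGroup E] [NormedSpace ℝ E] [NormedAddCommGroup F] [NormedSpace ℝ F]
    [MeasurableSpace E] {m : Set Ω → (E →L[ℝ] F)}

theorem si_repr (hca : CountablyAdditiveM m) (S T : SimpleFunc Ω E) :
    simpleIntegral m S = ∑ z ∈ (S.pair T).range, m ((S.pair T) ⁻¹' {z}) z.1 := by
  classical
  set P := S.pair T with hP
  rw [← Finset.sum_fiberwise_of_maps_to (g := Prod.fst) (t := S.range)
    (fun z hz => by
      rcases SimpleFunc.mem_range.1 hz with ⟨ω, hω⟩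
      exact SimpleFunc.mem_range.2 ⟨ω, congrArg Prod.fst hω⟩)]
  rw [simpleIntegral]
  refine Finset.sum_congr rfl (fun x hx => ?_)
  have hset : S ⁻¹' {x} = ⋃ z ∈ P.range.filter (fun z => z.1 = x), P ⁻¹' {z} := by
    ext ω
    simp only [Set.mem_preimage, Set.mem_singleton_iff, Set.mem_iUnion, Finset.mem_filter]
    constructor
    · intro h
      exact ⟨P ω, ⟨⟨SimpleFunc.mem_range_self P ω, h⟩, rfl⟩⟩
    · rintro ⟨z, ⟨⟨_, hz1⟩, hz2⟩⟩
      rw [show S ω = (P ω).1 from rfl, hz2, hz1]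
  have hdis : ((P.range.filter (fun z => z.1 = x)) : Set (E × E)).PairwiseDisjoint
      (fun z => P ⁻¹' {z}) := by
    intro z _ z' _ hzz'
    apply Set.disjoint_left.2
    intro ω hω hω'
    exact hzz' ((Set.mem_preimage.1 hω).symm.trans (Set.mem_preimage.1 hω'))
  rw [hset, m_biUnion hca _ _ (fun z _ => P.measurableSet_fiber z) hdis]
  rw [ContinuousLinearMap.sum_apply]
  refine Finset.sum_congr rfl (fun z hz => ?_)
  rw [(Finset.mem_filter.1 hz).2]

theorem si_repr2 (hca : CountablyAdditiveM m) (S T : SimpleFunc Ω E) :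
    simpleIntegral m T = ∑ z ∈ (S.pair T).range, m ((S.pair T) ⁻¹' {z}) z.2 := by
  classical
  set P := S.pair T with hP
  rw [← Finset.sum_fiberwise_of_maps_to (g := Prod.snd) (t := T.range)
    (fun z hz => by
      rcases SimpleFunc.mem_range.1 hz with ⟨ω, hω⟩
      exact SimpleFunc.mem_range.2 ⟨ω, congrArg Prod.snd hω⟩)]
  rw [simpleIntegral]
  refine Finset.sum_congr rfl (fun x hx => ?_)
  have hset : T ⁻¹' {x} = ⋃ z ∈ P.range.filter (fun z => z.2 = x), P ⁻¹' {z} := by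
    ext ω
    simp only [Set.mem_preimage, Set.mem_singleton_iff, Set.mem_iUnion, Finset.mem_filter]
    constructor
    · intro h
      exact ⟨P ω, ⟨⟨SimpleFunc.mem_range_self P ω, h⟩, rfl⟩⟩
    · rintro ⟨z, ⟨⟨_, hz1⟩, hz2⟩⟩
      rw [show T ω = (P ω).2 from rfl, hz2, hz1]
  have hdis : ((P.range.filter (fun z => z.2 = x)) : Set (E × E)).PairwiseDisjoint
      (fun z => P ⁻¹' {z}) := by
    intro z _ z' _ hzz'
    apply Set.disjoint_left.2
    intro ω hω hω'
    exact hzz' ((Set.mem_preimage.1 hω).symm.trans (Set.mem_preimage.1 hω'))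
  rw [hset, m_biUnion hca _ _ (fun z _ => P.measurableSet_fiber z) hdis]
  rw [ContinuousLinearMap.sum_apply]
  refine Finset.sum_congr rfl (fun z hz => ?_)
  rw [(Finset.mem_filter.1 hz).2]

theorem si_sub_norm (hca : CountablyAdditiveM m) (ν : Measure Ω)
    (hν : ∀ B : Set Ω, MeasurableSet B → ν B = varM m B) (S T : SimpleFunc Ω E) :
    (‖simpleIntegral m S - simpleIntegral m T‖₊ : ℝ≥0∞)
      ≤ ∫⁻ ω, (‖S ω - T ω‖₊ : ℝ≥0∞) ∂ν := by
  classical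
  set P := S.pair T with hP
  have h1 : simpleIntegral m S - simpleIntegral m T
      = ∑ z ∈ P.range, m (P ⁻¹' {z}) (z.1 - z.2) := by
    rw [si_repr hca S T, si_repr2 hca S T, ← Finset.sum_sub_distrib]
    refine Finset.sum_congr rfl (fun z hz => ?_)
    rw [map_sub]
  rw [h1]
  have h2 : ∫⁻ ω, (‖S ω - T ω‖₊ : ℝ≥0∞) ∂ν
      = ∑ z ∈ P.range, (‖z.1 - z.2‖₊ : ℝ≥0∞) * ν (P ⁻¹' {z}) := by
    rw [show (fun ω => (‖S ω - T ω‖₊ : ℝ≥0∞))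
        = ⇑(P.map (fun z => (‖z.1 - z.2‖₊ : ℝ≥0∞))) from by
      ext ω; simp [SimpleFunc.coe_map, hP]]
    rw [SimpleFunc.lintegral_eq_lintegral, SimpleFunc.map_lintegral]
  rw [h2]
  refine le_trans (le_trans (ENNReal.coe_mono (nnnorm_sum_le _ _))
    (le_of_eq (ENNReal.coe_finset_sum _ _))) (Finset.sum_le_sum (fun z _ => ?_))
  refine le_trans (ENNReal.coe_mono ((m (P ⁻¹' {z})).le_opNNNorm _)) ?_
  rw [ENNReal.coe_mul, hν _ (P.measurableSet_fiber z), mul_comm]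
  exact mul_le_mul_right (nnnorm_le_varM (m := m) (P.measurableSet_fiber z)) _

theorem si_norm (hca : CountablyAdditiveM m) (ν : Measure Ω)
    (hν : ∀ B : Set Ω, MeasurableSet B → ν B = varM m B) (S : SimpleFunc Ω E) :
    (‖simpleIntegral m S‖₊ : ℝ≥0∞) ≤ ∫⁻ ω, (‖S ω‖₊ : ℝ≥0∞) ∂ν := by
  have h := si_sub_norm hca ν hν S (SimpleFunc.const Ω (0 : E))
  have h0 : simpleIntegral m (SimpleFunc.const Ω (0 : E)) = 0 := by
    rw [simpleIntegral]
    refine Finset.sum_eq_zero (fun x hx => ?_)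
    rcases SimpleFunc.mem_range.1 hx with ⟨ω, hω⟩
    simp only [SimpleFunc.coe_const, Function.const_apply] at hω
    rw [← hω]; simp
  rw [h0, sub_zero] at h
  simpa using h

end SILemmas

section VarApprox

variable {Ω E F : Type*} [MeasurableSpace Ω]
    [NormedAddCommGroup E] [NormedSpace ℝ E] [NormedAddCommGroup F] [NormedSpace ℝ F]
    {m : Set Ω → (E →L[ℝ] F)}

theorem varM_approx (hvar : ∀ B : Set Ω, MeasurableSet B → varM m B < ∞)
    {B : Set Ω} (hB : MeasurableSet B) {δ : ℝ≥0∞} (hδ : δ ≠ 0) :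
    ∃ (n : ℕ) (Bs : Fin n → Set Ω) (es : Fin n → E),
      (∀ i, MeasurableSet (Bs i)) ∧ Pairwise (Function.onFun Disjoint Bs) ∧ (∀ i, Bs i ⊆ B) ∧
      (∀ i, ‖es i‖₊ ≤ 1) ∧ varM m B ≤ (∑ i, (‖m (Bs i) (es i)‖₊ : ℝ≥0∞)) + δ := by
  classical
  by_cases hle : varM m B ≤ δ
  · exact ⟨0, fun i => ∅, fun i => 0, fun i => i.elim0, Subsingleton.pairwise,
      fun i => i.elim0, fun i => i.elim0, by simpa using hle⟩
  push_neg at hle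
  have hδtop : δ ≠ ∞ := fun h => (by simp [h] at hle)
  have hvB := hvar B hB
  have hv0 : varM m B ≠ 0 := by
    intro h
    rw [h] at hle
    exact absurd hle (by simp)
  have hhalf : δ / 2 ≠ 0 := by
    simp [ENNReal.div_eq_zero_iff, hδ]
  have hlt : varM m B - δ / 2 < varM m B :=
    ENNReal.sub_lt_self hvB.ne hv0 hhalf
  rw [varM] at hlt
  obtain ⟨n, hlt⟩ := lt_iSup_iff.1 hlt
  obtain ⟨Bs, hlt⟩ := lt_iSup_iff.1 hlt
  obtain ⟨hmeas, hlt⟩ := lt_iSup_iff.1 hlt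
  obtain ⟨hpd, hlt⟩ := lt_iSup_iff.1 hlt
  obtain ⟨hsub, hlt⟩ := lt_iSup_iff.1 hlt
  set η : NNReal := δ.toNNReal / (2 * (n + 1)) with hη
  have hδt0 : δ.toNNReal ≠ 0 := by
    simpa [ENNReal.toNNReal_eq_zero_iff, hδtop] using hδ
  have hηpos : 0 < η := by
    rw [hη]
    apply div_pos (pos_iff_ne_zero.2 hδt0)
    positivity
  have hes : ∀ i : Fin n, ∃ e : E, ‖e‖₊ ≤ 1 ∧ ‖m (Bs i)‖₊ ≤ ‖m (Bs i) e‖₊ + η := by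
    intro i
    by_cases h0 : ‖m (Bs i)‖₊ ≤ η
    · exact ⟨0, by simp, le_trans h0 (by simp)⟩
    · push_neg at h0
      have hr : ‖m (Bs i)‖₊ - η < ‖m (Bs i)‖₊ := tsub_lt_self (lt_of_le_of_lt zero_le h0) hηpos
      obtain ⟨e, he1, he2⟩ := (m (Bs i)).exists_lt_apply_of_lt_opNNNorm hr
      exact ⟨e, he1.le, tsub_le_iff_right.1 he2.le⟩
  choose es hes1 hes2 using hes
  refine ⟨n, Bs, es, hmeas, hpd, hsub, hes1, ?_⟩
  have step1 : varM m B ≤ (∑ i, (‖m (Bs i)‖₊ : ℝ≥0∞)) + δ / 2 := by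
    calc varM m B = varM m B - δ / 2 + δ / 2 := by
          rw [tsub_add_cancel_of_le]
          exact le_trans (ENNReal.half_le_self) hle.le
      _ ≤ (∑ i, (‖m (Bs i)‖₊ : ℝ≥0∞)) + δ / 2 := add_le_add hlt.le le_rfl
  refine le_trans step1 ?_
  have step2 : (∑ i, (‖m (Bs i)‖₊ : ℝ≥0∞)) ≤ (∑ i, (‖m (Bs i) (es i)‖₊ : ℝ≥0∞)) + δ / 2 := by
    calc (∑ i, (‖m (Bs i)‖₊ : ℝ≥0∞))
        ≤ ∑ i : Fin n, ((‖m (Bs i) (es i)‖₊ : ℝ≥0∞) + η) :=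
          Finset.sum_le_sum (fun i _ => by exact_mod_cast hes2 i)
      _ = (∑ i, (‖m (Bs i) (es i)‖₊ : ℝ≥0∞)) + n * η := by
          rw [Finset.sum_add_distrib]
          simp [mul_comm]
      _ ≤ (∑ i, (‖m (Bs i) (es i)‖₊ : ℝ≥0∞)) + δ / 2 := by
          refine add_le_add le_rfl ?_
          rw [hη]
          calc (n : ℝ≥0∞) * ((δ.toNNReal / (2 * (n + 1)) : NNReal) : ℝ≥0∞)
              = (((n : NNReal) * (δ.toNNReal / (2 * (n + 1))) : NNReal) : ℝ≥0∞) := by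
                push_cast; ring
            _ ≤ ((δ.toNNReal / 2 : NNReal) : ℝ≥0∞) := by
                rw [ENNReal.coe_le_coe, ← NNReal.coe_le_coe]
                push_cast
                have hn : (0:ℝ) < 2 * ((n:ℝ) + 1) := by positivity
                have key : (n:ℝ) / (2 * ((n:ℝ) + 1)) ≤ 1 / 2 := by
                  rw [div_le_div_iff₀ hn (by norm_num)]
                  nlinarith
                calc (n:ℝ) * ((δ.toNNReal:ℝ) / (2 * ((n:ℝ) + 1)))
                    = (δ.toNNReal:ℝ) * ((n:ℝ) / (2 * ((n:ℝ) + 1))) := by ring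
                  _ ≤ (δ.toNNReal:ℝ) * (1/2) :=
                      mul_le_mul_of_nonneg_left key (by positivity)
                  _ = (δ.toNNReal:ℝ) / 2 := by ring
            _ ≤ δ / 2 := by
                rw [ENNReal.coe_div (by norm_num)]
                simp [ENNReal.coe_toNNReal hδtop]
  calc (∑ i, (‖m (Bs i)‖₊ : ℝ≥0∞)) + δ / 2
      ≤ ((∑ i, (‖m (Bs i) (es i)‖₊ : ℝ≥0∞)) + δ / 2) + δ / 2 := add_le_add step2 le_rfl
    _ = (∑ i, (‖m (Bs i) (es i)‖₊ : ℝ≥0∞)) + δ := by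
        rw [add_assoc, ENNReal.add_halves]

end VarApprox

section Holder

variable {Ω E F : Type*} [MeasurableSpace Ω] (P : Measure Ω) [IsProbabilityMeasure P]
    [NormedAddCommGroup E] [NormedSpace ℝ E] [NormedAddCommGroup F] [NormedSpace ℝ F]
    {m : Set Ω → (E →L[ℝ] F)}

theorem simple_holder {p : ℝ≥0∞} (hp : 1 ≤ p)
    (hvar : ∀ B : Set Ω, MeasurableSet B → varM m B < ∞)
    (ν : Measure Ω) (hν : ∀ B : Set Ω, MeasurableSet B → ν B = varM m B) (hac : ν ≪ P)
    {A : Set Ω}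
    (S : SimpleFunc Ω E) (hS0 : ∀ ω, ω ∉ A → S ω = 0) :
    ∫⁻ ω, (‖S ω‖₊ : ℝ≥0∞) ∂ν ≤ eLpNorm S p P * qVar P m p A := by
  classical
  have hp0 : p ≠ 0 := fun h => by simp [h] at hp
  have hI : ∫⁻ ω, (‖S ω‖₊ : ℝ≥0∞) ∂ν
      = ∑ x ∈ S.range, (‖x‖₊ : ℝ≥0∞) * ν (S ⁻¹' {x}) := by
    rw [show (fun ω => (‖S ω‖₊ : ℝ≥0∞)) = ⇑(S.map (fun x => (‖x‖₊ : ℝ≥0∞))) from by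
      ext ω; simp [SimpleFunc.coe_map]]
    rw [SimpleFunc.lintegral_eq_lintegral, SimpleFunc.map_lintegral]
  set t : ℝ≥0∞ := eLpNorm S p P with hts
  by_cases ht0 : t = 0
  · have hz : (⇑S) =ᵐ[P] 0 := (eLpNorm_eq_zero_iff S.aestronglyMeasurable hp0).1 ht0
    have hzν : (⇑S) =ᵐ[ν] 0 := hac.ae_le hz
    have h00 : ∫⁻ ω, (‖S ω‖₊ : ℝ≥0∞) ∂ν = ∫⁻ _ω, (0:ℝ≥0∞) ∂ν :=
      lintegral_congr_ae (by filter_upwards [hzν] with ω h; simp [h])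
    simp [h00]
  have httop : t ≠ ∞ := (S.memLp_of_isFiniteMeasure p P).eLpNorm_lt_top.ne
  set t' : NNReal := t.toNNReal with ht'
  have htt' : t = (t' : ℝ≥0∞) := (ENNReal.coe_toNNReal httop).symm
  have ht'0 : t' ≠ 0 := by
    simp [ht', ENNReal.toNNReal_eq_zero_iff, ht0, httop]
  set R := S.range.erase 0 with hR
  have hsumR : ∑ x ∈ S.range, (‖x‖₊ : ℝ≥0∞) * ν (S ⁻¹' {x})
      = ∑ x ∈ R, (‖x‖₊ : ℝ≥0∞) * ν (S ⁻¹' {x}) := by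
    rw [hR, Finset.sum_erase _ (by simp)]
  have hRA : ∀ x ∈ R, S ⁻¹' {x} ⊆ A := by
    intro x hx ω hω
    by_contra hωA
    have := hS0 ω hωA
    rw [Set.mem_preimage, Set.mem_singleton_iff] at hω
    exact (Finset.mem_erase.1 hx).1 (by rw [← hω, this])
  rw [hI, hsumR]
  apply ENNReal.le_of_forall_pos_le_add
  intro ε hε hq
  by_cases hRe : R = ∅
  · simp [hRe]
  set K : ℝ≥0∞ := ∑ x ∈ R, (‖x‖₊ : ℝ≥0∞) with hK
  have hK0 : K ≠ 0 := by
    rw [hK]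
    intro h
    rw [Finset.sum_eq_zero_iff] at h
    obtain ⟨x, hx⟩ := Finset.nonempty_iff_ne_empty.2 hRe
    have := h x hx
    simp only [ENNReal.coe_eq_zero, nnnorm_eq_zero] at this
    exact (Finset.mem_erase.1 hx).1 this
  have hKtop : K ≠ ∞ := by
    rw [hK, ← ENNReal.coe_finset_sum]
    exact ENNReal.coe_ne_top
  set δ : ℝ≥0∞ := (ε : ℝ≥0∞) / K with hδ
  have hδ0 : δ ≠ 0 := by
    rw [hδ]
    simp [ENNReal.div_eq_zero_iff, hε.ne', hKtop]
  have hch : ∀ x : {x // x ∈ R}, ∃ (n : ℕ) (Bs : Fin n → Set Ω) (es : Fin n → E),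
      (∀ i, MeasurableSet (Bs i)) ∧ Pairwise (Function.onFun Disjoint Bs) ∧
      (∀ i, Bs i ⊆ S ⁻¹' {(x : E)}) ∧ (∀ i, ‖es i‖₊ ≤ 1) ∧
      varM m (S ⁻¹' {(x : E)}) ≤ (∑ i, (‖m (Bs i) (es i)‖₊ : ℝ≥0∞)) + δ :=
    fun x => varM_approx hvar (S.measurableSet_fiber _) hδ0
  choose nn Bs es hmeas hpd hsub hes1 hkey using hch
  set ι := (x : {x // x ∈ R}) × Fin (nn x) with hι
  set e : Fin (Fintype.card ι) ≃ ι := (Fintype.equivFin ι).symm with he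
  set As' : Fin (Fintype.card ι) → Set Ω := fun k => Bs (e k).1 (e k).2 with hAs'
  set xs' : Fin (Fintype.card ι) → E :=
    fun k => (((t'⁻¹ * ‖((e k).1 : E)‖₊ : NNReal) : ℝ)) • es (e k).1 (e k).2 with hxs'
  have hmeas' : ∀ k, MeasurableSet (As' k) := fun k => hmeas _ _
  have hsubA : ∀ k, As' k ⊆ A := fun k =>
    subset_trans (hsub _ _) (hRA _ (e k).1.2)
  have hfiberdisj : ∀ (x x' : E), x ≠ x' → Disjoint (S ⁻¹' {x}) (S ⁻¹' {x'}) := by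
    intro x x' hxx
    apply Set.disjoint_left.2
    intro ω h1 h2
    rw [Set.mem_preimage, Set.mem_singleton_iff] at h1 h2
    exact hxx (h1.symm.trans h2)
  have hdkey : ∀ σ τ : ι, σ ≠ τ → Disjoint (Bs σ.1 σ.2) (Bs τ.1 τ.2) := by
    rintro ⟨x, j⟩ ⟨x', j'⟩ hστ
    by_cases hxx : x = x'
    · subst hxx
      have hjj : j ≠ j' := fun h => hστ (by rw [h])
      exact hpd x hjj
    · exact Disjoint.mono (hsub x j) (hsub x' j')
        (hfiberdisj _ _ (fun h => hxx (Subtype.coe_injective h)))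
  have hdisj' : Pairwise (Function.onFun Disjoint As') :=
    fun k k' hkk' => hdkey (e k) (e k') (fun h => hkk' (e.injective h))
  have hnorm_xs : ∀ k, ‖xs' k‖₊ ≤ t'⁻¹ * ‖((e k).1 : E)‖₊ := by
    intro k
    rw [hxs', nnnorm_smul, real_nnnorm_nnreal]
    calc (t'⁻¹ * ‖((e k).1 : E)‖₊) * ‖es (e k).1 (e k).2‖₊
        ≤ (t'⁻¹ * ‖((e k).1 : E)‖₊) * 1 := mul_le_mul_right (hes1 _ _) _
      _ = t'⁻¹ * ‖((e k).1 : E)‖₊ := mul_one _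
  have hptwise : ∀ ω, ‖∑ k, (As' k).indicator (fun _ => xs' k) ω‖₊ ≤ t'⁻¹ * ‖S ω‖₊ := by
    intro ω
    by_cases hω : ∃ k, ω ∈ As' k
    · obtain ⟨k₀, hk₀⟩ := hω
      have hsum : (∑ k, (As' k).indicator (fun _ => xs' k) ω) = xs' k₀ := by
        rw [Finset.sum_eq_single_of_mem k₀ (Finset.mem_univ _)]
        · rw [Set.indicator_of_mem hk₀]
        · intro k _ hk
          exact Set.indicator_of_notMem
            (fun hmem => (Set.disjoint_left.1 (hdisj' hk) hmem) hk₀) _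
      rw [hsum]
      have hSx : S ω = ((e k₀).1 : E) := by
        have := hsub (e k₀).1 (e k₀).2 hk₀
        rwa [Set.mem_preimage, Set.mem_singleton_iff] at this
      rw [hSx]
      exact hnorm_xs k₀
    · push_neg at hω
      have h0 : (∑ k, (As' k).indicator (fun _ => xs' k) ω) = 0 :=
        Finset.sum_eq_zero fun k _ => Set.indicator_of_notMem (hω k) _
      simp [h0]
  have hg1 : eLpNorm (fun ω => ∑ k, (As' k).indicator (fun _ => xs' k) ω) p P ≤ 1 := by
    have hmono : eLpNorm (fun ω => ∑ k, (As' k).indicator (fun _ => xs' k) ω) p P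
        ≤ eLpNorm (((t'⁻¹ : NNReal) : ℝ) • (⇑S)) p P := by
      apply eLpNorm_mono_nnnorm
      intro ω
      show ‖∑ k, (As' k).indicator (fun _ => xs' k) ω‖₊ ≤ ‖((t'⁻¹ : NNReal) : ℝ) • S ω‖₊
      rw [nnnorm_smul, real_nnnorm_nnreal]
      exact hptwise ω
    rw [eLpNorm_const_smul, enorm_eq_nnnorm, real_nnnorm_nnreal] at hmono
    refine le_trans hmono ?_
    rw [← hts, htt', ← ENNReal.coe_mul, inv_mul_cancel₀ ht'0, ENNReal.coe_one]
  have hQ : (∑ k, (‖m (As' k) (xs' k)‖₊ : ℝ≥0∞)) ≤ qVar P m p A := by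
    rw [qVar]
    apply le_iSup_of_le (Fintype.card ι)
    apply le_iSup_of_le As'
    apply le_iSup_of_le xs'
    apply le_iSup_of_le hmeas'
    apply le_iSup_of_le hdisj'
    apply le_iSup_of_le hsubA
    exact le_iSup_of_le hg1 (le_refl _)
  have hsum_eq : ∀ k, (‖m (As' k) (xs' k)‖₊ : ℝ≥0∞)
      = ((t'⁻¹ : NNReal) : ℝ≥0∞) * (‖((e k).1 : E)‖₊ : ℝ≥0∞)
        * (‖m (As' k) (es (e k).1 (e k).2)‖₊ : ℝ≥0∞) := by
    intro k
    rw [hxs', ContinuousLinearMap.map_smul, nnnorm_smul, real_nnnorm_nnreal]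
    push_cast
    ring
  have hQ' : (∑ x ∈ R.attach, ∑ i, ((t'⁻¹ : NNReal) : ℝ≥0∞) * (‖(x : E)‖₊ : ℝ≥0∞)
      * (‖m (Bs x i) (es x i)‖₊ : ℝ≥0∞)) ≤ qVar P m p A := by
    refine le_trans (le_of_eq ?_) hQ
    rw [show (∑ k, (‖m (As' k) (xs' k)‖₊ : ℝ≥0∞))
        = ∑ k, ((t'⁻¹ : NNReal) : ℝ≥0∞) * (‖((e k).1 : E)‖₊ : ℝ≥0∞)
          * (‖m (Bs (e k).1 (e k).2) (es (e k).1 (e k).2)‖₊ : ℝ≥0∞) from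
      Finset.sum_congr rfl fun k _ => hsum_eq k]
    rw [Equiv.sum_comp e (fun σ : ι => ((t'⁻¹ : NNReal) : ℝ≥0∞) * (‖(σ.1 : E)‖₊ : ℝ≥0∞)
      * (‖m (Bs σ.1 σ.2) (es σ.1 σ.2)‖₊ : ℝ≥0∞))]
    rw [← Finset.univ_sigma_univ, Finset.sum_sigma]
    rw [Finset.univ_eq_attach]
  have hνx : ∀ x : {x // x ∈ R}, ν (S ⁻¹' {(x : E)})
      ≤ (∑ i, (‖m (Bs x i) (es x i)‖₊ : ℝ≥0∞)) + δ := by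
    intro x
    rw [hν _ (S.measurableSet_fiber _)]
    exact hkey x
  calc ∑ x ∈ R, (‖x‖₊ : ℝ≥0∞) * ν (S ⁻¹' {x})
      = ∑ x ∈ R.attach, (‖(x : E)‖₊ : ℝ≥0∞) * ν (S ⁻¹' {(x : E)}) :=
        (Finset.sum_attach _ _).symm
    _ ≤ ∑ x ∈ R.attach, (‖(x : E)‖₊ : ℝ≥0∞)
          * ((∑ i, (‖m (Bs x i) (es x i)‖₊ : ℝ≥0∞)) + δ) :=
        Finset.sum_le_sum fun x _ => mul_le_mul_right (hνx x) _
    _ = (∑ x ∈ R.attach, (‖(x : E)‖₊ : ℝ≥0∞) * ∑ i, (‖m (Bs x i) (es x i)‖₊ : ℝ≥0∞))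
          + (∑ x ∈ R.attach, (‖(x : E)‖₊ : ℝ≥0∞)) * δ := by
        rw [Finset.sum_mul, ← Finset.sum_add_distrib]
        exact Finset.sum_congr rfl fun x _ => mul_add _ _ _
    _ ≤ t * qVar P m p A + ε := by
        apply add_le_add
        · have hfact : (∑ x ∈ R.attach, (‖(x : E)‖₊ : ℝ≥0∞)
              * ∑ i, (‖m (Bs x i) (es x i)‖₊ : ℝ≥0∞))
              = (t' : ℝ≥0∞) * ∑ x ∈ R.attach, ∑ i, ((t'⁻¹ : NNReal) : ℝ≥0∞)
                * (‖(x : E)‖₊ : ℝ≥0∞) * (‖m (Bs x i) (es x i)‖₊ : ℝ≥0∞) := by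
            rw [Finset.mul_sum]
            refine Finset.sum_congr rfl fun x _ => ?_
            rw [Finset.mul_sum, Finset.mul_sum]
            refine Finset.sum_congr rfl fun i _ => ?_
            rw [ENNReal.coe_inv ht'0, ← mul_assoc, ← mul_assoc,
              ENNReal.mul_inv_cancel (by exact_mod_cast ht'0) ENNReal.coe_ne_top, one_mul]
          rw [hfact, htt']
          exact mul_le_mul_right hQ' _
        · have hKeq : (∑ x ∈ R.attach, (‖(x : E)‖₊ : ℝ≥0∞)) = K := by
            rw [hK]; exact Finset.sum_attach R (fun x => ((‖x‖₊ : ℝ≥0∞)))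
          rw [hKeq, hδ]
          exact ENNReal.mul_div_le

end Holder
/-- Every `Y ∈ L^p(Ω,E,ℙ)` supported in `A` is `m`-integrable (there is a sequence of
simple functions converging `|m|`-a.e. to `Y` which is Cauchy in `L¹(|m|)` and whose
integrals against `m` converge), and the resulting integral `z = ∫ Y dm` satisfies
`‖z‖ ≤ ∫ ‖Y‖ d|m| ≤ ‖Y‖_{L^p} · m̄_q(A)`. -/
theorem stmt7 {Ω E F : Type*} [MeasurableSpace Ω] (P : Measure Ω) [IsProbabilityMeasure P]
    [NormedAddCommGroup E] [NormedSpace ℝ E] [TopologicalSpace.SeparableSpace E]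
    [MeasurableSpace E] [BorelSpace E]
    [NormedAddCommGroup F] [NormedSpace ℝ F] [CompleteSpace F]
    (p q : ℝ≥0∞) (hp : 1 ≤ p) (hp' : p ≠ ∞) (hpq : 1 / p + 1 / q = 1)
    (m : Set Ω → (E →L[ℝ] F)) (hca : CountablyAdditiveM m)
    (hfinvar : ∀ B : Set Ω, MeasurableSet B → varM m B < ∞)
    (ν : Measure Ω) (hν : ∀ B : Set Ω, MeasurableSet B → ν B = varM m B)
    (hac : ν ≪ P)
    (A : Set Ω) (hA : MeasurableSet A) (hfin : qVar P m p A < ∞)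
    (Y : Ω → E) (hYmeas : Measurable Y) (hY : MemLp Y p P)
    (hsupp : ∀ᵐ ω ∂P, ω ∉ A → Y ω = 0) :
    ∃ (Yn : ℕ → SimpleFunc Ω E) (z : F),
      (∀ᵐ ω ∂ν, Tendsto (fun n => Yn n ω) atTop (nhds (Y ω))) ∧
      Tendsto (fun jk : ℕ × ℕ =>
          ∫⁻ ω, (‖Yn jk.1 ω - Yn jk.2 ω‖₊ : ℝ≥0∞) ∂ν) atTop (nhds 0) ∧
      Tendsto (fun n => simpleIntegral m (Yn n)) atTop (nhds z) ∧
      (‖z‖₊ : ℝ≥0∞) ≤ ∫⁻ ω, (‖Y ω‖₊ : ℝ≥0∞) ∂ν ∧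
      ∫⁻ ω, (‖Y ω‖₊ : ℝ≥0∞) ∂ν ≤ eLpNorm Y p P * qVar P m p A := by
  classical
  haveI : SecondCountableTopology E := UniformSpace.secondCountable_of_separable E
  haveI hνfin : IsFiniteMeasure ν :=
    ⟨by rw [hν _ MeasurableSet.univ]; exact hfinvar _ MeasurableSet.univ⟩
  set Y' : Ω → E := A.indicator Y with hY'
  have hY'meas : Measurable Y' := hYmeas.indicator hA
  have hY'eqP : Y' =ᵐ[P] Y := by
    filter_upwards [hsupp] with ω h
    by_cases hω : ω ∈ A
    · simp [hY', Set.indicator_of_mem hω]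
    · simp [hY', Set.indicator_of_notMem hω, h hω]
  have hY'eqν : Y' =ᵐ[ν] Y := hac.ae_le hY'eqP
  have hY'mem : MemLp Y' p P := hY.ae_eq hY'eqP.symm
  -- the approximating simple functions
  set G : ℕ → SimpleFunc Ω E := fun n =>
    SimpleFunc.approxOn Y' hY'meas Set.univ 0 (Set.mem_univ 0) n with hG
  set Yn : ℕ → SimpleFunc Ω E := fun n =>
    SimpleFunc.piecewise A hA (G n) (SimpleFunc.const Ω 0) with hYn
  have hYn_mem : ∀ n ω, ω ∈ A → Yn n ω = G n ω := by
    intro n ω hω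
    show (SimpleFunc.piecewise A hA (G n) (SimpleFunc.const Ω 0)) ω = G n ω
    rw [SimpleFunc.coe_piecewise]
    exact Set.piecewise_eq_of_mem _ _ _ hω
  have hYn_not : ∀ n ω, ω ∉ A → Yn n ω = 0 := by
    intro n ω hω
    show (SimpleFunc.piecewise A hA (G n) (SimpleFunc.const Ω 0)) ω = 0
    rw [SimpleFunc.coe_piecewise]
    exact Set.piecewise_eq_of_notMem _ _ _ hω
  have hY'0 : ∀ ω, ω ∉ A → Y' ω = 0 := fun ω hω => Set.indicator_of_notMem hω _
  have hYn_tendsto : ∀ ω, Tendsto (fun n => Yn n ω) atTop (nhds (Y' ω)) := by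
    intro ω
    by_cases hω : ω ∈ A
    · have h1 : ∀ n, Yn n ω = G n ω := fun n => hYn_mem n ω hω
      simp only [funext fun n => h1 n]
      exact SimpleFunc.tendsto_approxOn hY'meas (Set.mem_univ 0) (by simp)
    · have h1 : ∀ n, Yn n ω = 0 := fun n => hYn_not n ω hω
      rw [hY'0 ω hω]
      simp only [funext fun n => h1 n]
      exact tendsto_const_nhds
  have hsuppν : ∀ᵐ ω ∂ν, Tendsto (fun n => Yn n ω) atTop (nhds (Y ω)) := by
    filter_upwards [hY'eqν] with ω h
    exact h ▸ hYn_tendsto ω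
  -- Lp convergence of the approximations
  have hLpG : Tendsto (fun n => eLpNorm (⇑(G n) - Y') p P) atTop (nhds 0) := by
    apply SimpleFunc.tendsto_approxOn_Lp_eLpNorm hY'meas (Set.mem_univ 0) hp'
    · filter_upwards with ω using (by simp)
    · simpa using hY'mem.eLpNorm_lt_top
  have hYnLp : ∀ n, eLpNorm (⇑(Yn n) - Y') p P ≤ eLpNorm (⇑(G n) - Y') p P := by
    intro n
    apply eLpNorm_mono
    intro ω
    by_cases hω : ω ∈ A
    · simp [Pi.sub_apply, hYn_mem n ω hω]
    · simp [Pi.sub_apply, hYn_not n ω hω, hY'0 ω hω]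
  have hεn : Tendsto (fun n => eLpNorm (⇑(Yn n) - Y') p P) atTop (nhds 0) :=
    tendsto_of_tendsto_of_tendsto_of_le_of_le tendsto_const_nhds hLpG
      (fun n => zero_le) hYnLp
  have hLfin : eLpNorm Y p P ≠ ∞ := hY.eLpNorm_lt_top.ne
  -- the Lp bound on each Yn
  have hSn_le : ∀ n, eLpNorm (⇑(Yn n)) p P
      ≤ eLpNorm Y p P + eLpNorm (⇑(Yn n) - Y') p P := by
    intro n
    calc eLpNorm (⇑(Yn n)) p P = eLpNorm ((⇑(Yn n) - Y') + Y') p P := by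
          congr 1; ext ω; simp
      _ ≤ eLpNorm (⇑(Yn n) - Y') p P + eLpNorm Y' p P :=
          eLpNorm_add_le ((Yn n).aestronglyMeasurable.sub hY'mem.1) hY'mem.1 hp
      _ = eLpNorm Y p P + eLpNorm (⇑(Yn n) - Y') p P := by
          rw [eLpNorm_congr_ae hY'eqP, add_comm]
  -- Hölder bound for the simple functions
  have hsimple : ∀ n, ∫⁻ ω, (‖Yn n ω‖₊ : ℝ≥0∞) ∂ν
      ≤ eLpNorm (⇑(Yn n)) p P * qVar P m p A := fun n =>
    simple_holder P hp hfinvar ν hν hac (Yn n) (fun ω hω => hYn_not n ω hω)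
  -- Hölder bound for Y itself (via Fatou)
  have hII : ∫⁻ ω, (‖Y ω‖₊ : ℝ≥0∞) ∂ν ≤ eLpNorm Y p P * qVar P m p A := by
    have h1 : ∫⁻ ω, (‖Y ω‖₊ : ℝ≥0∞) ∂ν = ∫⁻ ω, (‖Y' ω‖₊ : ℝ≥0∞) ∂ν :=
      lintegral_congr_ae (by filter_upwards [hY'eqν] with ω h; rw [h])
    have h2 : ∫⁻ ω, (‖Y' ω‖₊ : ℝ≥0∞) ∂ν
        ≤ liminf (fun n => ∫⁻ ω, (‖Yn n ω‖₊ : ℝ≥0∞) ∂ν) atTop := by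
      have hpt : ∀ ω, (‖Y' ω‖₊ : ℝ≥0∞) = liminf (fun n => (‖Yn n ω‖₊ : ℝ≥0∞)) atTop := by
        intro ω
        exact (ENNReal.tendsto_coe.2 (hYn_tendsto ω).nnnorm).liminf_eq.symm
      rw [lintegral_congr hpt]
      exact lintegral_liminf_le
        (fun n => (Yn n).measurable.nnnorm.coe_nnreal_ennreal)
    have h3 : liminf (fun n => ∫⁻ ω, (‖Yn n ω‖₊ : ℝ≥0∞) ∂ν) atTop
        ≤ eLpNorm Y p P * qVar P m p A := by
      have hbd : ∀ n, ∫⁻ ω, (‖Yn n ω‖₊ : ℝ≥0∞) ∂ν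
          ≤ (eLpNorm Y p P + eLpNorm (⇑(Yn n) - Y') p P) * qVar P m p A := fun n =>
        le_trans (hsimple n) (mul_le_mul_left (hSn_le n) _)
      have hlim : Tendsto (fun n => (eLpNorm Y p P + eLpNorm (⇑(Yn n) - Y') p P)
          * qVar P m p A) atTop (nhds (eLpNorm Y p P * qVar P m p A)) := by
        have h4 : Tendsto (fun n => eLpNorm Y p P + eLpNorm (⇑(Yn n) - Y') p P)
            atTop (nhds (eLpNorm Y p P + 0)) :=
          Tendsto.add tendsto_const_nhds hεn
        rw [add_zero] at h4
        exact ENNReal.Tendsto.mul_const h4 (Or.inr hfin.ne)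
      calc liminf (fun n => ∫⁻ ω, (‖Yn n ω‖₊ : ℝ≥0∞) ∂ν) atTop
          ≤ liminf (fun n => (eLpNorm Y p P + eLpNorm (⇑(Yn n) - Y') p P)
              * qVar P m p A) atTop := liminf_le_liminf (Eventually.of_forall hbd)
        _ = eLpNorm Y p P * qVar P m p A := hlim.liminf_eq
    rw [h1]
    exact le_trans h2 h3
  have hIIfin : ∫⁻ ω, (‖Y ω‖₊ : ℝ≥0∞) ∂ν ≠ ∞ :=
    (lt_of_le_of_lt hII (ENNReal.mul_lt_top hY.eLpNorm_lt_top hfin)).ne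
  -- L¹(ν) convergence to Y (dominated convergence)
  have hYnbd : ∀ n ω, (‖Yn n ω‖₊ : ℝ≥0∞) ≤ 2 * (‖Y' ω‖₊ : ℝ≥0∞) := by
    intro n ω
    by_cases hω : ω ∈ A
    · rw [hYn_mem n ω hω]
      have := SimpleFunc.norm_approxOn_zero_le hY'meas (Set.mem_univ 0) ω n
      have h2 : ‖G n ω‖₊ ≤ ‖Y' ω‖₊ + ‖Y' ω‖₊ := by
        rw [← NNReal.coe_le_coe]
        push_cast
        simpa using this
      calc (‖G n ω‖₊ : ℝ≥0∞) ≤ (‖Y' ω‖₊ : ℝ≥0∞) + (‖Y' ω‖₊ : ℝ≥0∞) := by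
            exact_mod_cast h2
        _ = 2 * (‖Y' ω‖₊ : ℝ≥0∞) := (two_mul _).symm
    · rw [hYn_not n ω hω]
      simp
  have hT : Tendsto (fun n => ∫⁻ ω, (‖Yn n ω - Y ω‖₊ : ℝ≥0∞) ∂ν) atTop (nhds 0) := by
    have hm : ∀ n, Measurable fun ω => (‖Yn n ω - Y ω‖₊ : ℝ≥0∞) :=
      fun n => ((Yn n).measurable.sub hYmeas).nnnorm.coe_nnreal_ennreal
    have hb : ∀ n, (fun ω => (‖Yn n ω - Y ω‖₊ : ℝ≥0∞)) ≤ᶠ[ae ν]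
        fun ω => 3 * (‖Y ω‖₊ : ℝ≥0∞) := by
      intro n
      filter_upwards [hY'eqν] with ω h
      calc (‖Yn n ω - Y ω‖₊ : ℝ≥0∞) ≤ (‖Yn n ω‖₊ : ℝ≥0∞) + (‖Y ω‖₊ : ℝ≥0∞) := by
            exact_mod_cast nnnorm_sub_le _ _
        _ ≤ 2 * (‖Y' ω‖₊ : ℝ≥0∞) + (‖Y ω‖₊ : ℝ≥0∞) := add_le_add (hYnbd n ω) le_rfl
        _ = 3 * (‖Y ω‖₊ : ℝ≥0∞) := by rw [h]; ring
    have hf : ∫⁻ ω, 3 * (‖Y ω‖₊ : ℝ≥0∞) ∂ν ≠ ⊤ := by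
      rw [lintegral_const_mul _ hYmeas.nnnorm.coe_nnreal_ennreal]
      exact ENNReal.mul_ne_top (by norm_num) hIIfin
    have hl : ∀ᵐ ω ∂ν, Tendsto (fun n => (‖Yn n ω - Y ω‖₊ : ℝ≥0∞)) atTop
        (nhds (0 : ℝ≥0∞)) := by
      filter_upwards [hsuppν] with ω h
      have h2 : Tendsto (fun n => Yn n ω - Y ω) atTop (nhds (Y ω - Y ω)) :=
        h.sub tendsto_const_nhds
      rw [sub_self] at h2
      simpa using ENNReal.tendsto_coe.2 h2.nnnorm
    simpa using tendsto_lintegral_of_dominated_convergence _ hm hb hf hl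
  -- Cauchy in L¹(ν)
  have hcauchyL : Tendsto (fun jk : ℕ × ℕ =>
      ∫⁻ ω, (‖Yn jk.1 ω - Yn jk.2 ω‖₊ : ℝ≥0∞) ∂ν) atTop (nhds 0) := by
    have hbound : ∀ jk : ℕ × ℕ, ∫⁻ ω, (‖Yn jk.1 ω - Yn jk.2 ω‖₊ : ℝ≥0∞) ∂ν
        ≤ (∫⁻ ω, (‖Yn jk.1 ω - Y ω‖₊ : ℝ≥0∞) ∂ν)
          + ∫⁻ ω, (‖Yn jk.2 ω - Y ω‖₊ : ℝ≥0∞) ∂ν := by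
      intro jk
      calc ∫⁻ ω, (‖Yn jk.1 ω - Yn jk.2 ω‖₊ : ℝ≥0∞) ∂ν
          ≤ ∫⁻ ω, ((‖Yn jk.1 ω - Y ω‖₊ : ℝ≥0∞) + (‖Yn jk.2 ω - Y ω‖₊ : ℝ≥0∞)) ∂ν := by
            apply lintegral_mono
            intro ω
            show (‖Yn jk.1 ω - Yn jk.2 ω‖₊ : ℝ≥0∞)
              ≤ (‖Yn jk.1 ω - Y ω‖₊ : ℝ≥0∞) + (‖Yn jk.2 ω - Y ω‖₊ : ℝ≥0∞)
            have h := nnnorm_sub_le (Yn jk.1 ω - Y ω) (Yn jk.2 ω - Y ω)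
            rw [sub_sub_sub_cancel_right] at h
            exact_mod_cast h
        _ = _ := lintegral_add_left
            ((Yn jk.1).measurable.sub hYmeas).nnnorm.coe_nnreal_ennreal _
    have hsum : Tendsto (fun jk : ℕ × ℕ =>
        (∫⁻ ω, (‖Yn jk.1 ω - Y ω‖₊ : ℝ≥0∞) ∂ν)
          + ∫⁻ ω, (‖Yn jk.2 ω - Y ω‖₊ : ℝ≥0∞) ∂ν) atTop (nhds 0) := by
      rw [← prod_atTop_atTop_eq]
      have h1 := hT.comp (tendsto_fst (f := atTop (α := ℕ)) (g := atTop (α := ℕ)))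
      have h2 := hT.comp (tendsto_snd (f := atTop (α := ℕ)) (g := atTop (α := ℕ)))
      have := Tendsto.add h1 h2
      simpa using this
    exact tendsto_of_tendsto_of_tendsto_of_le_of_le tendsto_const_nhds hsum
      (fun jk => zero_le) hbound
  -- the integrals form a Cauchy sequence
  have hSIcauchy : CauchySeq (fun n => simpleIntegral m (Yn n)) := by
    rw [EMetric.cauchySeq_iff]
    intro ε hε
    set ε' : ℝ≥0∞ := min ε 1 with hε'
    have hε'0 : ε' ≠ 0 := (lt_min hε zero_lt_one).ne'
    have hε'top : ε' ≠ ∞ := (lt_of_le_of_lt (min_le_right ε 1) one_lt_top).ne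
    have hhalf : ε' / 2 ≠ 0 := by simp [ENNReal.div_eq_zero_iff, hε'0]
    have hev : ∀ᶠ jk : ℕ × ℕ in atTop,
        (∫⁻ ω, (‖Yn jk.1 ω - Yn jk.2 ω‖₊ : ℝ≥0∞) ∂ν) ≤ ε' / 2 :=
      ENNReal.tendsto_nhds_zero.1 hcauchyL (ε' / 2) (pos_iff_ne_zero.2 hhalf)
    obtain ⟨N, hN⟩ := eventually_atTop.1 hev
    refine ⟨max N.1 N.2, fun j hj k hk => ?_⟩
    have hjk : (j, k) ≥ N :=
      ⟨le_trans (le_max_left _ _) hj, le_trans (le_max_right _ _) hk⟩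
    have h1 := hN (j, k) hjk
    calc edist (simpleIntegral m (Yn j)) (simpleIntegral m (Yn k))
        = (‖simpleIntegral m (Yn j) - simpleIntegral m (Yn k)‖₊ : ℝ≥0∞) :=
          edist_eq_enorm_sub _ _
      _ ≤ ∫⁻ ω, (‖Yn j ω - Yn k ω‖₊ : ℝ≥0∞) ∂ν := si_sub_norm hca ν hν _ _
      _ ≤ ε' / 2 := h1
      _ < ε' := ENNReal.half_lt_self hε'0 hε'top
      _ ≤ ε := min_le_left _ _
  obtain ⟨z, hz⟩ := cauchySeq_tendsto_of_complete hSIcauchy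
  -- norm bound on z
  have hzn : (‖z‖₊ : ℝ≥0∞) ≤ ∫⁻ ω, (‖Y ω‖₊ : ℝ≥0∞) ∂ν := by
    have h1 : Tendsto (fun n => (‖simpleIntegral m (Yn n)‖₊ : ℝ≥0∞)) atTop
        (nhds (‖z‖₊ : ℝ≥0∞)) := ENNReal.tendsto_coe.2 hz.nnnorm
    have h2 : ∀ n, (‖simpleIntegral m (Yn n)‖₊ : ℝ≥0∞)
        ≤ (∫⁻ ω, (‖Yn n ω - Y ω‖₊ : ℝ≥0∞) ∂ν) + ∫⁻ ω, (‖Y ω‖₊ : ℝ≥0∞) ∂ν := by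
      intro n
      refine le_trans (si_norm hca ν hν (Yn n)) ?_
      calc ∫⁻ ω, (‖Yn n ω‖₊ : ℝ≥0∞) ∂ν
          ≤ ∫⁻ ω, ((‖Yn n ω - Y ω‖₊ : ℝ≥0∞) + (‖Y ω‖₊ : ℝ≥0∞)) ∂ν := by
            apply lintegral_mono
            intro ω
            show (‖Yn n ω‖₊ : ℝ≥0∞) ≤ (‖Yn n ω - Y ω‖₊ : ℝ≥0∞) + (‖Y ω‖₊ : ℝ≥0∞)
            have h := nnnorm_add_le (Yn n ω - Y ω) (Y ω)
            rw [sub_add_cancel] at h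
            exact_mod_cast h
        _ = _ := lintegral_add_left
            ((Yn n).measurable.sub hYmeas).nnnorm.coe_nnreal_ennreal _
    have h3 : Tendsto (fun n => (∫⁻ ω, (‖Yn n ω - Y ω‖₊ : ℝ≥0∞) ∂ν)
        + ∫⁻ ω, (‖Y ω‖₊ : ℝ≥0∞) ∂ν) atTop (nhds (∫⁻ ω, (‖Y ω‖₊ : ℝ≥0∞) ∂ν)) := by
      have := Tendsto.add hT
        (tendsto_const_nhds (x := ∫⁻ ω, (‖Y ω‖₊ : ℝ≥0∞) ∂ν) (f := atTop))
      simpa using this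
    exact le_of_tendsto_of_tendsto' h1 h3 h2
  exact ⟨Yn, z, hsuppν, hcauchyL, hz, hzn, hII⟩
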